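/- arXiv:math/0210180 — 2 statements merged into one kernel-verified Lean document; each statement's English description precedes it below -/
import Mathlib

section
/- Let κ ∈ ℂ with κ ∉ ℝ≥0 (κ is not a nonnegative real number), and let v, w ∈ E. Then the set of pairs (μ, n) ∈ Q × ℤ≥0 satisfying the equation ∥μ∥² + 2⟨v,μ⟩ + 2i⟨w,μ⟩ = 2κn (that is, |μ|² + 2(λ,μ) = 2κn) is finite. -/
open RealInnerProductSpace

/-- If `κ ∈ ℂ` is not a nonnegative real number, then the set of
pairs `(μ, n) ∈ Q × ℤ≥0` with `‖μ‖² + 2⟪v,μ⟫ + 2i⟪w,μ⟫ = 2κn` is finite. -/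
theorem stmt_2 {E : Type*} [NormedAddCommGroup E] [InnerProductSpace ℝ E]
    [FiniteDimensional ℝ E] {r : ℕ} (b : Module.Basis (Fin r) ℝ E)
    (Q : AddSubgroup E) (hQ : Q = AddSubgroup.closure (Set.range b))
    (v w : E) (κ : ℂ) (hκ : ∀ x : ℝ, 0 ≤ x → (x : ℂ) ≠ κ) :
    {p : E × ℕ | p.1 ∈ Q ∧
      ((‖p.1‖ ^ 2 + 2 * ⟪v, p.1⟫ : ℝ) : ℂ) + ((2 * ⟪w, p.1⟫ : ℝ) : ℂ) * Complex.I
        = 2 * κ * (p.2 : ℂ)}.Finite := by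
  have hκ0 : κ ≠ 0 := fun h => hκ 0 le_rfl (by simp [h])
  set S := {p : E × ℕ | p.1 ∈ Q ∧
      ((‖p.1‖ ^ 2 + 2 * ⟪v, p.1⟫ : ℝ) : ℂ) + ((2 * ⟪w, p.1⟫ : ℝ) : ℂ) * Complex.I
        = 2 * κ * (p.2 : ℂ)} with hS
  -- split the equation into real and imaginary parts
  have hre : ∀ p ∈ S, ‖p.1‖ ^ 2 + 2 * ⟪v, p.1⟫ = 2 * κ.re * p.2 ∧
      2 * ⟪w, p.1⟫ = 2 * κ.im * p.2 := by
    intro p hp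
    have h := hp.2
    rw [Complex.ext_iff] at h
    simpa [-Complex.ofReal_pow] using h
  -- a uniform bound on ‖p.1‖
  obtain ⟨C, hC0, hC⟩ : ∃ C : ℝ, 0 ≤ C ∧ ∀ p ∈ S, ‖p.1‖ ≤ C := by
    by_cases him : κ.im = 0
    · -- then κ.re < 0
      have hreκ : κ.re < 0 := by
        by_contra h
        push_neg at h
        exact hκ κ.re h (by rw [Complex.ext_iff]; simp [him])
      refine ⟨2 * ‖v‖, by positivity, fun p hp => ?_⟩
      obtain ⟨h1, _⟩ := hre p hp
      have hn : (0 : ℝ) ≤ (p.2 : ℝ) := Nat.cast_nonneg _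
      have hle : ‖p.1‖ ^ 2 ≤ 2 * ‖v‖ * ‖p.1‖ := by
        have h2 : 2 * κ.re * p.2 ≤ 0 := by
          have := mul_nonpos_of_nonpos_of_nonneg (by linarith : 2 * κ.re ≤ 0) hn
          linarith
        have h3 : -(2 * ⟪v, p.1⟫) ≤ 2 * (‖v‖ * ‖p.1‖) := by
          have := abs_real_inner_le_norm v p.1
          have := neg_abs_le ⟪v, p.1⟫
          nlinarith [abs_real_inner_le_norm v p.1, neg_abs_le ⟪v, p.1⟫]
        nlinarith
      rcases (norm_nonneg p.1).eq_or_lt with h0 | h0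
      · rw [← h0]; positivity
      · rw [pow_two] at hle
        exact le_of_mul_le_mul_right (by linarith) h0
    · refine ⟨2 * |κ.re / κ.im| * ‖w‖ + 2 * ‖v‖, by positivity, fun p hp => ?_⟩
      obtain ⟨h1, h2⟩ := hre p hp
      have hn : (p.2 : ℝ) = ⟪w, p.1⟫ / κ.im := by
        field_simp at h2 ⊢
        linarith
      have hiv : |⟪v, p.1⟫| ≤ ‖v‖ * ‖p.1‖ := abs_real_inner_le_norm v p.1
      have hiw : |⟪w, p.1⟫| ≤ ‖w‖ * ‖p.1‖ := abs_real_inner_le_norm w p.1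
      have hsq : ‖p.1‖ ^ 2 = 2 * (κ.re / κ.im) * ⟪w, p.1⟫ - 2 * ⟪v, p.1⟫ := by
        rw [hn] at h1
        field_simp at h1 ⊢
        nlinarith [h1]
      have hb : ‖p.1‖ ^ 2 ≤ (2 * |κ.re / κ.im| * ‖w‖ + 2 * ‖v‖) * ‖p.1‖ := by
        have h3 : 2 * (κ.re / κ.im) * ⟪w, p.1⟫ ≤ 2 * |κ.re / κ.im| * (‖w‖ * ‖p.1‖) := by
          calc 2 * (κ.re / κ.im) * ⟪w, p.1⟫ ≤ |2 * (κ.re / κ.im) * ⟪w, p.1⟫| := le_abs_self _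
            _ = 2 * |κ.re / κ.im| * |⟪w, p.1⟫| := by
                rw [abs_mul, abs_mul]; simp
            _ ≤ 2 * |κ.re / κ.im| * (‖w‖ * ‖p.1‖) := by
                have : (0:ℝ) ≤ 2 * |κ.re / κ.im| := by positivity
                exact mul_le_mul_of_nonneg_left hiw this
        have h4 : -(2 * ⟪v, p.1⟫) ≤ 2 * (‖v‖ * ‖p.1‖) := by
          nlinarith [neg_abs_le ⟪v, p.1⟫]
        nlinarith
      rcases (norm_nonneg p.1).eq_or_lt with h0 | h0
      · rw [← h0]; positivity
      · rw [pow_two] at hb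
        exact le_of_mul_le_mul_right (by linarith) h0
  -- fst is injective on S
  have hinj : Set.InjOn Prod.fst S := by
    intro p hp q hq h
    have h1 := hp.2
    have h2 := hq.2
    rw [h] at h1
    have h3 : 2 * κ * (p.2 : ℂ) = 2 * κ * (q.2 : ℂ) := h1.symm.trans h2
    have h4 : (p.2 : ℂ) = (q.2 : ℂ) :=
      mul_left_cancel₀ (by simpa using hκ0 : (2 * κ : ℂ) ≠ 0) h3
    exact Prod.ext h (Nat.cast_injective h4)
  -- the image of S under fst is finite
  have himg : (Prod.fst '' S).Finite := by
    have hsub : Prod.fst '' S ⊆ Metric.closedBall 0 C ∩ (Q : Set E) := by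
      rintro x ⟨p, hp, rfl⟩
      exact ⟨Metric.mem_closedBall.mpr (by simpa using hC p hp), hp.1⟩
    refine Set.Finite.subset ?_ hsub
    rw [hQ, ← Submodule.span_int_eq_addSubgroupClosure]
    have : DiscreteTopology ((Submodule.span ℤ (Set.range ⇑b)).toAddSubgroup : Set E) :=
      (inferInstance : DiscreteTopology (Submodule.span ℤ (Set.range ⇑b)))
    exact Metric.finite_isBounded_inter_isClosed DiscreteTopology.isDiscrete Metric.isBounded_closedBall inferInstance
  exact Set.Finite.of_finite_image himg hinj
end

section
/- Let 𝔤 be a perfect Lie algebra over ℂ (i.e. ⁅𝔤,𝔤⁆ = 𝔤; for instance any finite-dimensional complex simple Lie algebra) and let V be a module over the polynomial loop algebra 𝔤[ε]. Then the annihilator subspaces form an increasing chain: V(1) ⊆ V(2) ⊆ V(3) ⊆ ⋯, i.e. V(N) ⊆ V(N+1) for every N ≥ 1. -/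
open TensorProduct

variable (𝔤 : Type*) [LieRing 𝔤] [LieAlgebra ℂ 𝔤]
variable (V : Type*) [AddCommGroup V] [Module ℂ V]
  [LieRingModule (Polynomial ℂ ⊗[ℂ] 𝔤) V]

/-- `V(N)`: the set of vectors of a `𝔤[ε]`-module `V` annihilated by every product
`(ε^{k₁}x₁)⋯(ε^{k_m}x_m)` with `m ≥ 1`, `kᵢ ≥ 1`, `k₁ + ⋯ + k_m = N`; i.e. the
annihilator in `V` of the degree-`N` component `U(𝔤₊)^N` of `U(𝔤₊)`, `𝔤₊ = ε𝔤[ε]`. -/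
noncomputable def loopAnn (N : ℕ) : Set V :=
  {v : V | ∀ l : List (ℕ × 𝔤), l ≠ [] → (∀ p ∈ l, 1 ≤ p.1) →
    (l.map Prod.fst).sum = N →
    l.foldr
      (fun p w => ⁅(((Polynomial.X : Polynomial ℂ) ^ p.1) ⊗ₜ[ℂ] p.2 :
        Polynomial ℂ ⊗[ℂ] 𝔤), w⁆) v = 0}

/-- If `𝔤` is a perfect Lie algebra over `ℂ` (e.g. any
finite-dimensional complex simple Lie algebra) and `V` is a `𝔤[ε]`-module, then
`V(N) ⊆ V(N+1)` for all `N ≥ 1`, i.e. `V(1) ⊆ V(2) ⊆ ⋯`. -/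
theorem stmt_8 (hperf : ⁅(⊤ : LieIdeal ℂ 𝔤), (⊤ : LieIdeal ℂ 𝔤)⁆ = ⊤)
    (N : ℕ) (hN : 1 ≤ N) :
    loopAnn 𝔤 V N ⊆ loopAnn 𝔤 V (N + 1) := by
  intro v hv
  set F : List (ℕ × 𝔤) → V := fun l => l.foldr
      (fun p w => ⁅(((Polynomial.X : Polynomial ℂ) ^ p.1) ⊗ₜ[ℂ] p.2 :
        Polynomial ℂ ⊗[ℂ] 𝔤), w⁆) v with hF
  -- every x ∈ 𝔤 is in the span of brackets
  have hspan : ∀ x : 𝔤, x ∈ Submodule.span ℂ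
      {m : 𝔤 | ∃ y ∈ (⊤ : LieIdeal ℂ 𝔤), ∃ z ∈ (⊤ : LieIdeal ℂ 𝔤), ⁅y, z⁆ = m} := by
    intro x
    have := LieSubmodule.lieIdeal_oper_eq_linear_span' (R := ℂ) (L := 𝔤) (M := 𝔤)
      (I := ⊤) (N := ⊤)
    rw [hperf] at this
    have hx : x ∈ ((⊤ : LieIdeal ℂ 𝔤) : Submodule ℂ 𝔤) := trivial
    rw [← this]; exact hx
  -- key lemma, strong induction on k
  have main : ∀ k : ℕ, 1 ≤ k → ∀ x : 𝔤, ∀ l : List (ℕ × 𝔤),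
      (∀ p ∈ l, 1 ≤ p.1) → k + (l.map Prod.fst).sum = N + 1 →
      ⁅(((Polynomial.X : Polynomial ℂ) ^ k) ⊗ₜ[ℂ] x : Polynomial ℂ ⊗[ℂ] 𝔤), F l⁆ = 0 := by
    intro k
    induction k using Nat.strong_induction_on with
    | _ k ih =>
      intro hk x l hl hsum
      rcases Nat.lt_or_ge k 2 with hk2 | hk2
      · -- k = 1 : tail has degree N, killed by hv
        interval_cases k
        have hlsum : (l.map Prod.fst).sum = N := by omega
        have hlne : l ≠ [] := by
          rintro rfl
          simp at hlsum; omega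
        have : F l = 0 := hv l hlne hl hlsum
        rw [this, lie_zero]
      · -- k ≥ 2 : use perfectness
        have key : ∀ x' ∈ Submodule.span ℂ
            {m : 𝔤 | ∃ y ∈ (⊤ : LieIdeal ℂ 𝔤), ∃ z ∈ (⊤ : LieIdeal ℂ 𝔤), ⁅y, z⁆ = m},
            ∀ c : ℂ,
            ⁅(((Polynomial.X : Polynomial ℂ) ^ k) ⊗ₜ[ℂ] (c • x') :
              Polynomial ℂ ⊗[ℂ] 𝔤), F l⁆ = 0 := by
          intro x' hx'
          refine Submodule.span_induction ?_ ?_ ?_ ?_ hx'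
          · rintro m ⟨y, -, z, -, rfl⟩ c
            have htm : ((Polynomial.X : Polynomial ℂ) ^ k) ⊗ₜ[ℂ] (c • ⁅y, z⁆)
                = ⁅(((Polynomial.X : Polynomial ℂ) ^ (k-1)) ⊗ₜ[ℂ] (c • y) :
                    Polynomial ℂ ⊗[ℂ] 𝔤),
                   ((Polynomial.X : Polynomial ℂ) ^ 1) ⊗ₜ[ℂ] z⁆ := by
              rw [LieAlgebra.ExtendScalars.bracket_tmul, ← pow_add,
                show k - 1 + 1 = k from by omega, smul_lie]
            rw [htm, lie_lie]
            have h1 : ⁅(((Polynomial.X : Polynomial ℂ) ^ 1) ⊗ₜ[ℂ] z :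
                Polynomial ℂ ⊗[ℂ] 𝔤), F l⁆ = F ((1, z) :: l) := rfl
            have h2 : F ((1, z) :: l) = F ((1, z) :: l) := rfl
            have e1 : ⁅(((Polynomial.X : Polynomial ℂ) ^ (k-1)) ⊗ₜ[ℂ] (c • y) :
                Polynomial ℂ ⊗[ℂ] 𝔤), F ((1, z) :: l)⁆ = 0 := by
              apply ih (k-1) (by omega) (by omega) (c • y) ((1, z) :: l)
              · intro p hp
                rcases List.mem_cons.mp hp with h | h
                · simp [h]
                · exact hl p h
              · simp at hsum ⊢; omega
            have e2 : ⁅(((Polynomial.X : Polynomial ℂ) ^ (k-1)) ⊗ₜ[ℂ] (c • y) :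
                Polynomial ℂ ⊗[ℂ] 𝔤), F l⁆ = 0 := by
              have : F ((k-1, c • y) :: l) = 0 := by
                apply hv
                · simp
                · intro p hp
                  rcases List.mem_cons.mp hp with h | h
                  · simp [h]; omega
                  · exact hl p h
                · simp at hsum ⊢; omega
              exact this
            rw [h1, e1, e2, lie_zero, sub_zero]
          · intro c
            rw [smul_zero, tmul_zero, zero_lie]
          · intro a b _ _ ha hb c
            rw [smul_add, tmul_add, add_lie, ha, hb, add_zero]
          · intro t a _ ha c
            rw [smul_smul]
            exact ha (c * t)
        have := key x (hspan x) 1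
        rwa [one_smul] at this
  intro l hlne hl hsum
  match l with
  | [] => exact absurd rfl hlne
  | (k, x) :: l' =>
    have hk : 1 ≤ k := hl (k, x) List.mem_cons_self
    have : (l'.map Prod.fst).sum + k = N + 1 := by simpa [add_comm] using hsum
    exact main k hk x l' (fun p hp => hl p (List.mem_cons_of_mem _ hp)) (by omega)
end
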